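/- For every assignment of states (occupied or vacant) to the squares of Λ = {1,…,m} × {1,…,n}, if Λ contains no occupied star connected left-right crossing, then Λ contains a vacant plus connected top-down crossing. -/

import Mathlib

/-- Star adjacency on squares of the array: share at least a corner. -/
def starAdj (i j : ℤ × ℤ) : Prop := max |i.1 - j.1| |i.2 - j.2| = 1

/-- Plus adjacency on squares of the array: share an edge. -/
def plusAdj (i j : ℤ × ℤ) : Prop := |i.1 - j.1| + |i.2 - j.2| = 1

/-- Membership in the rectangular array `Λ = {1,…,m} × {1,…,n}`. -/
def inRect (m n : ℤ) (k : ℤ × ℤ) : Prop :=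
  1 ≤ k.1 ∧ k.1 ≤ m ∧ 1 ≤ k.2 ∧ k.2 ≤ n

/-- A left-right crossing of `Λ = {1,…,m} × {1,…,n}` with respect to the adjacency
`adj`: a sequence of pairwise distinct squares of `Λ` with consecutive squares
adjacent, whose first square is the unique one with first coordinate `1` and whose
last square is the unique one with first coordinate `m`. -/
def IsLRCrossing (adj : ℤ × ℤ → ℤ × ℤ → Prop) (m n : ℤ) (J : List (ℤ × ℤ)) : Prop :=
  J ≠ [] ∧ J.Nodup ∧ J.Chain' adj ∧ (∀ k ∈ J, inRect m n k) ∧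
  (∀ k ∈ J, (k.1 = 1 ↔ J.head? = some k)) ∧
  (∀ k ∈ J, (k.1 = m ↔ J.getLast? = some k))

/-- A top-down crossing of `Λ = {1,…,m} × {1,…,n}` with respect to the adjacency
`adj`: a sequence of pairwise distinct squares of `Λ` with consecutive squares
adjacent, whose first square is the unique one with second coordinate `n` and whose
last square is the unique one with second coordinate `1`. -/
def IsTDCrossing (adj : ℤ × ℤ → ℤ × ℤ → Prop) (m n : ℤ) (J : List (ℤ × ℤ)) : Prop :=
  J ≠ [] ∧ J.Nodup ∧ J.Chain' adj ∧ (∀ k ∈ J, inRect m n k) ∧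
  (∀ k ∈ J, (k.2 = n ↔ J.head? = some k)) ∧
  (∀ k ∈ J, (k.2 = 1 ↔ J.getLast? = some k))

namespace VPTD


variable {α : Type*}

lemma chain_all {r : α → α → Prop} {p : α → Prop} (hr : ∀ x y, r x y → p y) :
    ∀ (a : α) (l : List α), p a → List.Chain r a l → ∀ k ∈ a :: l, p k := by
  intro a l
  induction l generalizing a with
  | nil =>
    intro ha _ k hk
    rcases List.mem_cons.mp hk with rfl | hk'
    · exact ha
    · simp at hk'
  | cons b t ih =>
    intro ha hch k hk
    cases hch with
    | cons_cons hab hbt =>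
      rcases List.mem_cons.mp hk with rfl | hk'
      · exact ha
      · exact ih b (hr _ _ hab) hbt k hk'

lemma mem_of_head? {l : List α} {u : α} (h : l.head? = some u) : u ∈ l := by
  cases l with
  | nil => simp at h
  | cons a t => simp at h; subst h; exact List.mem_cons_self

lemma mem_of_getLast? {l : List α} {u : α} (h : l.getLast? = some u) : u ∈ l := by
  cases l with
  | nil => simp at h
  | cons a t =>
    have hne : (a :: t) ≠ [] := by simp
    rw [List.getLast?_eq_getLast_of_ne_nil hne] at h
    have := List.getLast_mem hne
    simpa [← Option.some_inj.mp h] using this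

lemma exists_suffix_last (p : α → Prop) [DecidablePred p] :
    ∀ (l : List α), (∃ a ∈ l, p a) →
      ∃ b t, (b :: t) <:+ l ∧ p b ∧ ∀ x ∈ t, ¬ p x := by
  intro l
  induction l with
  | nil => rintro ⟨a, ha, -⟩; simp at ha
  | cons a l ih =>
    intro hex
    by_cases hl : ∃ x ∈ l, p x
    · obtain ⟨b, t, hsuf, hb, ht⟩ := ih hl
      exact ⟨b, t, hsuf.trans (List.suffix_cons a l), hb, ht⟩
    · have hpa : p a := by
        obtain ⟨x, hx, hpx⟩ := hex
        rcases List.mem_cons.mp hx with rfl | hx'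
        · exact hpx
        · exact absurd ⟨x, hx', hpx⟩ hl
      exact ⟨a, l, List.suffix_refl _, hpa, fun x hx hpx => hl ⟨x, hx, hpx⟩⟩

lemma exists_prefix_first (p : α → Prop) [DecidablePred p] :
    ∀ (l : List α), (∃ a ∈ l, p a) →
      ∃ t b, (t ++ [b]) <+: l ∧ p b ∧ ∀ x ∈ t, ¬ p x := by
  intro l
  induction l with
  | nil => rintro ⟨a, ha, -⟩; simp at ha
  | cons a l ih =>
    intro hex
    by_cases hpa : p a
    · exact ⟨[], a, ⟨l, rfl⟩, hpa, by simp⟩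
    · have hl : ∃ x ∈ l, p x := by
        obtain ⟨x, hx, hpx⟩ := hex
        rcases List.mem_cons.mp hx with rfl | hx'
        · exact absurd hpx hpa
        · exact ⟨x, hx', hpx⟩
      obtain ⟨t, b, ⟨r, hr⟩, hb, ht⟩ := ih hl
      refine ⟨a :: t, b, ⟨r, ?_⟩, hb, ?_⟩
      · simp [← hr]
      · intro x hx
        rcases List.mem_cons.mp hx with rfl | hx'
        · exact hpa
        · exact ht x hx'

lemma walk_of_chain {V : Type*} (G : SimpleGraph V) :
    ∀ (l : List V) (u v : V), l.head? = some u → l.getLast? = some v →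
      l.Chain' (fun x y => x = y ∨ G.Adj x y) →
      ∃ w : G.Walk u v, ∀ x ∈ w.support, x ∈ l := by
  intro l
  induction l with
  | nil => intro u v hu _ _; simp at hu
  | cons a t ih =>
    intro u v hu hv hch
    have hau : a = u := by simpa using hu
    subst hau
    cases t with
    | nil =>
      have hv' : a = v := by simpa using hv
      subst hv'
      exact ⟨SimpleGraph.Walk.nil, by simp⟩
    | cons b t' =>
      have hv' : (b :: t').getLast? = some v := by
        rw [List.getLast?_cons_cons] at hv; exact hv
      have h1 : a = b ∨ G.Adj a b := (List.isChain_cons_cons.mp hch).1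
      have h2 : (b :: t').Chain' (fun x y => x = y ∨ G.Adj x y) := (List.isChain_cons_cons.mp hch).2
      obtain ⟨w', hw'⟩ := ih b v rfl hv' h2
      rcases h1 with rfl | hadj
      · exact ⟨w', fun x hx => List.mem_cons_of_mem _ (hw' x hx)⟩
      · refine ⟨SimpleGraph.Walk.cons hadj w', ?_⟩
        intro x hx
        rw [SimpleGraph.Walk.support_cons] at hx
        rcases List.mem_cons.mp hx with rfl | hx'
        · exact List.mem_cons_self
        · exact List.mem_cons_of_mem _ (hw' x hx')

lemma walk_support_getLast? {V : Type*} {G : SimpleGraph V} {u v : V} (w : G.Walk u v) :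
    w.support.getLast? = some v := by
  induction w with
  | nil => simp
  | @cons a b c h p ih =>
    rw [SimpleGraph.Walk.support_cons, p.support_eq_cons, List.getLast?_cons_cons,
      ← p.support_eq_cons]
    exact ih

lemma path_of_chain {V : Type*} [DecidableEq V] (G : SimpleGraph V) (l : List V) (u v : V)
    (hu : l.head? = some u) (hv : l.getLast? = some v)
    (hch : l.Chain' (fun x y => x = y ∨ G.Adj x y)) :
    ∃ S : List V, S.Nodup ∧ S.Chain' G.Adj ∧ S.head? = some u ∧ S.getLast? = some v ∧
      ∀ x ∈ S, x ∈ l := by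
  obtain ⟨w, hw⟩ := walk_of_chain G l u v hu hv hch
  refine ⟨w.bypass.support, w.bypass_isPath.support_nodup,
    SimpleGraph.Walk.isChain_adj_support _, ?_, walk_support_getLast? _, ?_⟩
  · rw [w.bypass.support_eq_cons]; rfl
  · exact fun x hx => hw x (w.support_bypass_subset hx)

lemma assemble (adj : ℤ × ℤ → ℤ × ℤ → Prop) (hsymm : ∀ x y, adj x y → adj y x)
    (pred : ℤ × ℤ → Prop) (coord : ℤ × ℤ → ℤ) (A B : ℤ)
    (l : List (ℤ × ℤ)) (u v : ℤ × ℤ)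
    (hch : l.Chain' (fun x y => x = y ∨ adj x y))
    (hpred : ∀ k ∈ l, pred k)
    (hu : l.head? = some u) (hv : l.getLast? = some v)
    (hA : coord u = A) (hB : coord v = B) :
    ∃ J : List (ℤ × ℤ), J ≠ [] ∧ J.Nodup ∧ J.Chain' adj ∧ (∀ k ∈ J, pred k) ∧
      (∀ k ∈ J, (coord k = A ↔ J.head? = some k)) ∧
      (∀ k ∈ J, (coord k = B ↔ J.getLast? = some k)) := by
  classical
  have humem : u ∈ l := mem_of_head? hu
  by_cases hAB : A = B
  · subst hAB
    refine ⟨[u], by simp, by simp, List.isChain_singleton _, ?_, ?_, ?_⟩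
    · intro k hk
      simp only [List.mem_singleton] at hk; subst hk
      exact hpred _ humem
    · intro k hk
      simp only [List.mem_singleton] at hk; subst hk
      exact ⟨fun _ => rfl, fun _ => hA⟩
    · intro k hk
      simp only [List.mem_singleton] at hk; subst hk
      exact ⟨fun _ => by simp, fun _ => hA⟩
  · set G : SimpleGraph (ℤ × ℤ) :=
      { Adj := fun x y => x ≠ y ∧ adj x y,
        symm := ⟨fun x y hxy => ⟨Ne.symm hxy.1, hsymm _ _ hxy.2⟩⟩,
        loopless := ⟨fun x hx => hx.1 rfl⟩ } with hG
    have hch' : l.Chain' (fun x y => x = y ∨ G.Adj x y) := by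
      refine hch.imp ?_
      intro x y hxy
      rcases hxy with rfl | hxy
      · exact Or.inl rfl
      · by_cases hxyeq : x = y
        · exact Or.inl hxyeq
        · exact Or.inr ⟨hxyeq, hxy⟩
    obtain ⟨S, hnd, hchS, hhead, hlast, hsub⟩ := path_of_chain G l u v hu hv hch'
    obtain ⟨b, t, hsuf, hbA, htA⟩ :=
      exists_suffix_last (fun k => coord k = A) S ⟨u, mem_of_head? hhead, hA⟩
    obtain ⟨pre, hpre⟩ := hsuf
    have hchbt : (b :: t).Chain' G.Adj := by
      rw [← hpre] at hchS
      exact (List.isChain_append.mp hchS).2.1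
    have hlastbt : (b :: t).getLast? = some v := by
      rw [← hpre] at hlast
      rwa [List.getLast?_append_of_ne_nil _ (by simp)] at hlast
    have hndbt : (b :: t).Nodup := by
      rw [← hpre] at hnd
      exact (List.sublist_append_right pre _).nodup hnd
    have hsubbt : ∀ x ∈ b :: t, x ∈ l := by
      intro x hx
      exact hsub x (by rw [← hpre]; exact List.mem_append_right _ hx)
    have hvmem : v ∈ b :: t := mem_of_getLast? hlastbt
    obtain ⟨t₂, b₂, hpre2, hb₂B, ht₂B⟩ :=
      exists_prefix_first (fun k => coord k = B) (b :: t) ⟨v, hvmem, hB⟩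
    obtain ⟨rest, hrest⟩ := hpre2
    obtain ⟨t₂', ht₂⟩ : ∃ t₂', t₂ = b :: t₂' := by
      cases t₂ with
      | nil =>
        exfalso
        simp only [List.nil_append] at hrest
        have hb₂b : b₂ = b := by
          have := congrArg List.head? hrest
          simpa using this
        subst hb₂b
        exact hAB (by rw [← hbA, ← hb₂B])
      | cons x t₂'' =>
        have hxb : x = b := by
          have := congrArg List.head? hrest
          simpa using this
        subst hxb
        exact ⟨t₂'', rfl⟩
    subst ht₂
    have hJpre : ((b :: t₂') ++ [b₂]) ++ rest = b :: t := hrest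
    have hJchain : ((b :: t₂') ++ [b₂]).Chain' G.Adj := by
      rw [← hJpre] at hchbt
      exact (List.isChain_append.mp hchbt).1
    have hJnd : ((b :: t₂') ++ [b₂]).Nodup := by
      rw [← hJpre] at hndbt
      exact ((List.sublist_append_left _ rest).nodup) hndbt
    have hJsub : ∀ x ∈ (b :: t₂') ++ [b₂], x ∈ b :: t := by
      intro x hx
      rw [← hJpre]; exact List.mem_append_left _ hx
    have hJhead : ((b :: t₂') ++ [b₂]).head? = some b := rfl
    have hJlast : ((b :: t₂') ++ [b₂]).getLast? = some b₂ := List.getLast?_concat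
    refine ⟨(b :: t₂') ++ [b₂], by simp, hJnd, hJchain.imp (fun _ _ hxy => hxy.2), ?_, ?_, ?_⟩
    · exact fun k hk => hpred k (hsubbt k (hJsub k hk))
    · intro k hk
      constructor
      · intro hkA
        rcases List.mem_cons.mp (hJsub k hk) with rfl | hk'
        · exact hJhead
        · exact absurd hkA (htA k hk')
      · intro hkh
        have hkb : k = b := by
          rw [hJhead] at hkh; exact (Option.some_inj.mp hkh).symm
        subst hkb; exact hbA
    · intro k hk
      constructor
      · intro hkB
        rcases List.mem_append.mp hk with hk' | hk'
        · exact absurd hkB (ht₂B k hk')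
        · have hkb : k = b₂ := by simpa using hk'
          subst hkb; exact hJlast
      · intro hkl
        have hkb : k = b₂ := by
          rw [hJlast] at hkl; exact (Option.some_inj.mp hkl).symm
        subst hkb; exact hb₂B


inductive Dir : Type
  | E | N | W | S
  deriving DecidableEq

instance : Fintype Dir := ⟨{.E, .N, .W, .S}, by intro x; cases x <;> simp⟩

def vec : Dir → ℤ × ℤ
  | .E => (1, 0)
  | .N => (0, 1)
  | .W => (-1, 0)
  | .S => (0, -1)

def rotL : Dir → Dir
  | .E => .N
  | .N => .W
  | .W => .S
  | .S => .E

def rotR : Dir → Dir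
  | .E => .S
  | .S => .W
  | .W => .N
  | .N => .E

def flankL (c : ℤ × ℤ) : Dir → ℤ × ℤ
  | .E => (c.1 + 1, c.2 + 1)
  | .N => (c.1, c.2 + 1)
  | .W => (c.1, c.2)
  | .S => (c.1 + 1, c.2)

def flankR (c : ℤ × ℤ) : Dir → ℤ × ℤ
  | .E => (c.1 + 1, c.2)
  | .N => (c.1 + 1, c.2 + 1)
  | .W => (c.1, c.2 + 1)
  | .S => (c.1, c.2)

lemma rotR_rotL : ∀ d, rotR (rotL d) = d := by decide
lemma rotL_rotR : ∀ d, rotL (rotR d) = d := by decide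
lemma rotL_injective : ∀ a b, rotL a = rotL b → a = b := by decide
lemma rotR_injective : ∀ a b, rotR a = rotR b → a = b := by decide

lemma vec_cases (d : Dir) :
    ((vec d).1 = 1 ∧ (vec d).2 = 0) ∨ ((vec d).1 = 0 ∧ (vec d).2 = 1) ∨
    ((vec d).1 = -1 ∧ (vec d).2 = 0) ∨ ((vec d).1 = 0 ∧ (vec d).2 = -1) := by
  cases d <;> simp [vec]

lemma flankL_shift (c : ℤ × ℤ) (d : Dir) : flankL (c + vec d) d = flankL c d + vec d := by
  cases d <;> simp [flankL, vec, Prod.ext_iff] <;> ring_nf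

lemma flankR_shift (c : ℤ × ℤ) (d : Dir) : flankR (c + vec d) d = flankR c d + vec d := by
  cases d <;> simp [flankL, flankR, vec, Prod.ext_iff] <;> ring_nf

lemma flankR_rotL (c : ℤ × ℤ) (d : Dir) : flankR (c + vec d) (rotL d) = flankL (c + vec d) d := by
  cases d <;> simp [flankL, flankR, vec, rotL, Prod.ext_iff] <;> ring_nf

lemma flankL_rotL (c : ℤ × ℤ) (d : Dir) : flankL (c + vec d) (rotL d) = flankL c d := by
  cases d <;> simp [flankL, vec, rotL, Prod.ext_iff] <;> ring_nf

lemma flankL_rotR (c : ℤ × ℤ) (d : Dir) : flankL (c + vec d) (rotR d) = flankR (c + vec d) d := by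
  cases d <;> simp [flankL, flankR, vec, rotR, Prod.ext_iff] <;> ring_nf

lemma flankR_rotR (c : ℤ × ℤ) (d : Dir) : flankR (c + vec d) (rotR d) = flankR c d := by
  cases d <;> simp [flankR, vec, rotR, Prod.ext_iff] <;> ring_nf

lemma flankL_eq_flankR (c : ℤ × ℤ) (d : Dir) : flankL c d = flankR c d + vec (rotL d) := by
  cases d <;> simp [flankL, flankR, vec, rotL, Prod.ext_iff] <;> ring_nf

lemma clashC1 (a : ℤ × ℤ) (e : Dir) :
    flankR (a - vec (rotR e)) (rotR e) = flankL (a - vec e) e := by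
  cases e <;> simp [flankL, flankR, vec, rotR, Prod.ext_iff] <;> ring_nf

lemma clashC2 (a : ℤ × ℤ) (e : Dir) :
    flankL (a - vec (rotL e)) (rotL e) = flankR (a - vec e) e := by
  cases e <;> simp [flankL, flankR, vec, rotL, Prod.ext_iff] <;> ring_nf

lemma clashC3 (a : ℤ × ℤ) (e : Dir) :
    flankR (a - vec (rotR e)) (rotR e) = flankL a (rotL e) := by
  cases e <;> simp [flankL, flankR, vec, rotL, rotR, Prod.ext_iff] <;> ring_nf

lemma vec_rotL (d : Dir) : vec (rotL d) = (-(vec d).2, (vec d).1) := by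
  cases d <;> simp [vec, rotL]

lemma plusAdj_coords {a b : ℤ × ℤ} :
    plusAdj a b ↔ ((a.1 = b.1 ∧ (a.2 = b.2 + 1 ∨ a.2 + 1 = b.2)) ∨
      (a.2 = b.2 ∧ (a.1 = b.1 + 1 ∨ a.1 + 1 = b.1))) := by
  unfold plusAdj
  rcases abs_cases (a.1 - b.1) with ⟨h1, h1'⟩ | ⟨h1, h1'⟩ <;>
  rcases abs_cases (a.2 - b.2) with ⟨h2, h2'⟩ | ⟨h2, h2'⟩ <;>
  rw [h1, h2] <;> omega

lemma starAdj_coords {a b : ℤ × ℤ} :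
    starAdj a b ↔ (a.1 - b.1 ≤ 1 ∧ b.1 - a.1 ≤ 1 ∧ a.2 - b.2 ≤ 1 ∧ b.2 - a.2 ≤ 1 ∧
      ¬(a.1 = b.1 ∧ a.2 = b.2)) := by
  unfold starAdj
  rcases max_cases |a.1 - b.1| |a.2 - b.2| with ⟨h, h'⟩ | ⟨h, h'⟩ <;> rw [h] <;>
  rcases abs_cases (a.1 - b.1) with ⟨h1, h1'⟩ | ⟨h1, h1'⟩ <;>
  rcases abs_cases (a.2 - b.2) with ⟨h2, h2'⟩ | ⟨h2, h2'⟩ <;>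
  simp only [h1, h2] at h' ⊢ <;> omega

lemma plusAdj_symm {a b : ℤ × ℤ} (h : plusAdj a b) : plusAdj b a := by
  rw [plusAdj_coords] at h ⊢; omega

lemma starAdj_symm {a b : ℤ × ℤ} (h : starAdj a b) : starAdj b a := by
  rw [starAdj_coords] at h ⊢; omega

lemma plusAdj_add_vec (k : ℤ × ℤ) (d : Dir) : plusAdj k (k + vec d) := by
  have h := vec_cases d
  rw [plusAdj_coords]
  simp only [Prod.fst_add, Prod.snd_add]
  omega

lemma starAdj_add_vec (k : ℤ × ℤ) (d : Dir) : starAdj k (k + vec d) := by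
  have h := vec_cases d
  rw [starAdj_coords]
  simp only [Prod.fst_add, Prod.snd_add]
  omega

lemma starAdj_diag (k : ℤ × ℤ) (d : Dir) : starAdj k (k + vec (rotL d) + vec d) := by
  have h := vec_cases d
  rw [starAdj_coords, vec_rotL]
  simp only [Prod.fst_add, Prod.snd_add]
  omega

section Walk

variable (m n : ℤ) (ω : ℤ × ℤ → Bool)

def Occ (k : ℤ × ℤ) : Prop :=
  (1 ≤ k.2 ∧ k.2 ≤ n) ∧ (k.1 ≤ 0 ∨ (1 ≤ k.1 ∧ k.1 ≤ m ∧ ω k = true))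

instance decOcc : DecidablePred (Occ m n ω) := fun k => by
  unfold Occ; infer_instance

abbrev State := (ℤ × ℤ) × Dir

def Inv (s : State) : Prop :=
  Occ m n ω (flankR s.1 s.2) ∧ ¬ Occ m n ω (flankL s.1 s.2)

def step (s : State) : State :=
  if Occ m n ω (flankL (s.1 + vec s.2) s.2) then (s.1 + vec s.2, rotL s.2)
  else if Occ m n ω (flankR (s.1 + vec s.2) s.2) then (s.1 + vec s.2, s.2)
  else (s.1 + vec s.2, rotR s.2)

lemma step_eq_L {s : State} (h : Occ m n ω (flankL (s.1 + vec s.2) s.2)) :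
    step m n ω s = (s.1 + vec s.2, rotL s.2) := by
  unfold step; rw [if_pos h]

lemma step_eq_S {s : State} (h1 : ¬ Occ m n ω (flankL (s.1 + vec s.2) s.2))
    (h2 : Occ m n ω (flankR (s.1 + vec s.2) s.2)) :
    step m n ω s = (s.1 + vec s.2, s.2) := by
  unfold step; rw [if_neg h1, if_pos h2]

lemma step_eq_R {s : State} (h1 : ¬ Occ m n ω (flankL (s.1 + vec s.2) s.2))
    (h2 : ¬ Occ m n ω (flankR (s.1 + vec s.2) s.2)) :
    step m n ω s = (s.1 + vec s.2, rotR s.2) := by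
  unfold step; rw [if_neg h1, if_neg h2]

lemma inv_step {s : State} (hs : Inv m n ω s) : Inv m n ω (step m n ω s) := by
  obtain ⟨c, d⟩ := s
  by_cases h1 : Occ m n ω (flankL (c + vec d) d)
  · rw [step_eq_L m n ω h1]
    exact ⟨by rw [flankR_rotL]; exact h1, by rw [flankL_rotL]; exact hs.2⟩
  · by_cases h2 : Occ m n ω (flankR (c + vec d) d)
    · rw [step_eq_S m n ω h1 h2]
      exact ⟨h2, h1⟩
    · rw [step_eq_R m n ω h1 h2]
      exact ⟨by rw [flankR_rotR]; exact hs.1, by rw [flankL_rotR]; exact h2⟩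

lemma step_inj {s t : State} (hs : Inv m n ω s) (ht : Inv m n ω t)
    (hst : step m n ω s = step m n ω t) : s = t := by
  obtain ⟨c, d⟩ := s
  obtain ⟨e, g⟩ := t
  have hs1 : Occ m n ω (flankR c d) := hs.1
  have hs2 : ¬ Occ m n ω (flankL c d) := hs.2
  have ht1 : Occ m n ω (flankR e g) := ht.1
  have ht2 : ¬ Occ m n ω (flankL e g) := ht.2
  by_cases h1 : Occ m n ω (flankL (c + vec d) d)
  · by_cases h3 : Occ m n ω (flankL (e + vec g) g)
    · -- (L, L)
      rw [step_eq_L m n ω h1, step_eq_L m n ω h3, Prod.mk.injEq] at hst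
      obtain ⟨hc, hd⟩ := hst
      dsimp only at hc hd
      have hdg : d = g := rotL_injective _ _ hd
      subst hdg
      have hce : c = e := by
        have := congrArg (fun z => z - vec d) hc
        simpa using this
      rw [hce]
    · by_cases h4 : Occ m n ω (flankR (e + vec g) g)
      · -- (L, S)
        exfalso
        rw [step_eq_L m n ω h1, step_eq_S m n ω h3 h4, Prod.mk.injEq] at hst
        obtain ⟨hc, hd⟩ := hst
        dsimp only at hc hd
        have hdg : d = rotR g := by rw [← hd, rotR_rotL]
        have e2 : e + vec g - vec (rotR g) = c := by
          rw [← hdg, ← hc]; exact add_sub_cancel_right _ _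
        have e1 : e + vec g - vec g = e := add_sub_cancel_right _ _
        have key := clashC1 (e + vec g) g
        rw [e1, e2, ← hdg] at key
        exact ht2 (key ▸ hs1)
      · -- (L, R)
        exfalso
        rw [step_eq_L m n ω h1, step_eq_R m n ω h3 h4, Prod.mk.injEq] at hst
        obtain ⟨hc, hd⟩ := hst
        dsimp only at hc hd
        have hg : g = rotL (rotL d) := by rw [hd, rotL_rotR]
        have key := clashC3 (c + vec d) (rotL d)
        rw [rotR_rotL] at key
        have e2 : c + vec d - vec d = c := add_sub_cancel_right _ _
        rw [e2, ← hg, hc] at key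
        exact h3 (key ▸ hs1)
  · by_cases h2 : Occ m n ω (flankR (c + vec d) d)
    · -- s straight
      by_cases h3 : Occ m n ω (flankL (e + vec g) g)
      · -- (S, L)
        exfalso
        rw [step_eq_S m n ω h1 h2, step_eq_L m n ω h3, Prod.mk.injEq] at hst
        obtain ⟨hc, hd⟩ := hst
        dsimp only at hc hd
        have hgd : g = rotR d := by rw [hd, rotR_rotL]
        have key := clashC1 (c + vec d) d
        have e1 : c + vec d - vec d = c := add_sub_cancel_right _ _
        have e2 : c + vec d - vec (rotR d) = e := by
          rw [← hgd, hc]; exact add_sub_cancel_right _ _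
        rw [e1, e2, ← hgd] at key
        exact hs2 (key ▸ ht1)
      · by_cases h4 : Occ m n ω (flankR (e + vec g) g)
        · -- (S, S)
          rw [step_eq_S m n ω h1 h2, step_eq_S m n ω h3 h4, Prod.mk.injEq] at hst
          obtain ⟨hc, hd⟩ := hst
          dsimp only at hc hd
          subst hd
          have hce : c = e := by
            have := congrArg (fun z => z - vec d) hc
            simpa using this
          rw [hce]
        · -- (S, R)
          exfalso
          rw [step_eq_S m n ω h1 h2, step_eq_R m n ω h3 h4, Prod.mk.injEq] at hst
          obtain ⟨hc, hd⟩ := hst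
          dsimp only at hc hd
          have hg : g = rotL d := by rw [hd, rotL_rotR]
          have key := clashC2 (c + vec d) d
          have e1 : c + vec d - vec d = c := add_sub_cancel_right _ _
          have e2 : c + vec d - vec (rotL d) = e := by
            rw [← hg, hc]; exact add_sub_cancel_right _ _
          rw [e1, e2, ← hg] at key
          exact ht2 (key ▸ hs1)
    · -- s right turn
      by_cases h3 : Occ m n ω (flankL (e + vec g) g)
      · -- (R, L)
        exfalso
        rw [step_eq_R m n ω h1 h2, step_eq_L m n ω h3, Prod.mk.injEq] at hst
        obtain ⟨hc, hd⟩ := hst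
        dsimp only at hc hd
        have key := clashC3 (e + vec g) (rotR d)
        rw [rotL_rotR] at key
        rw [hd, rotR_rotL] at key
        rw [add_sub_cancel_right, ← hc] at key
        exact h1 (key ▸ ht1)
      · by_cases h4 : Occ m n ω (flankR (e + vec g) g)
        · -- (R, S)
          exfalso
          rw [step_eq_R m n ω h1 h2, step_eq_S m n ω h3 h4, Prod.mk.injEq] at hst
          obtain ⟨hc, hd⟩ := hst
          dsimp only at hc hd
          have key := clashC2 (c + vec d) g
          rw [← hd, rotL_rotR] at key
          rw [add_sub_cancel_right] at key
          have e2 : c + vec d - vec (rotR d) = e := by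
            rw [hd, hc]; exact add_sub_cancel_right _ _
          rw [e2, hd] at key
          exact hs2 (key ▸ ht1)
        · -- (R, R)
          rw [step_eq_R m n ω h1 h2, step_eq_R m n ω h3 h4, Prod.mk.injEq] at hst
          obtain ⟨hc, hd⟩ := hst
          dsimp only at hc hd
          have hdg : d = g := rotR_injective _ _ hd
          subst hdg
          have hce : c = e := by
            have := congrArg (fun z => z - vec d) hc
            simpa using this
          rw [hce]

def s0 : State := ((-1, n), Dir.E)

def orb (i : ℕ) : State := (step m n ω)^[i] (s0 n)

def pj (j : ℕ) : State := ((-1 - (j : ℤ), n), Dir.E)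

lemma inv_s0 (hn : 1 ≤ n) : Inv m n ω (s0 n) := by
  constructor
  · show Occ m n ω (flankR (-1, n) Dir.E)
    simp only [flankR, Occ]
    constructor
    · constructor <;> omega
    · left; omega
  · show ¬ Occ m n ω (flankL (-1, n) Dir.E)
    intro hocc
    have := hocc.1
    simp only [flankL] at this
    omega

lemma inv_pj (hn : 1 ≤ n) (j : ℕ) : Inv m n ω (pj n j) := by
  constructor
  · show Occ m n ω (flankR (-1 - (j : ℤ), n) Dir.E)
    simp only [flankR, Occ]
    constructor
    · constructor <;> omega
    · left; omega
  · show ¬ Occ m n ω (flankL (-1 - (j : ℤ), n) Dir.E)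
    intro hocc
    have := hocc.1
    simp only [flankL] at this
    omega

lemma step_pj (hn : 1 ≤ n) (j : ℕ) : step m n ω (pj n (j + 1)) = pj n j := by
  have hc : (pj n (j+1)).1 + vec (pj n (j+1)).2 = ((-1 - (j:ℤ), n) : ℤ × ℤ) := by
    simp only [pj, vec, Prod.mk_add_mk, Prod.ext_iff]
    push_cast
    constructor <;> ring
  have hL : ¬ Occ m n ω (flankL ((pj n (j+1)).1 + vec (pj n (j+1)).2) (pj n (j+1)).2) := by
    rw [hc]
    show ¬ Occ m n ω (flankL (-1 - (j : ℤ), n) Dir.E)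
    intro hocc
    have := hocc.1
    simp only [flankL] at this
    omega
  have hR : Occ m n ω (flankR ((pj n (j+1)).1 + vec (pj n (j+1)).2) (pj n (j+1)).2) := by
    rw [hc]
    show Occ m n ω (flankR (-1 - (j : ℤ), n) Dir.E)
    simp only [flankR, Occ]
    exact ⟨⟨by omega, by omega⟩, Or.inl (by omega)⟩
  rw [step_eq_S m n ω hL hR, hc]
  rfl

lemma orb_succ (i : ℕ) : orb m n ω (i + 1) = step m n ω (orb m n ω i) :=
  Function.iterate_succ_apply' _ _ _

lemma orb_inv (hn : 1 ≤ n) : ∀ i, Inv m n ω (orb m n ω i) := by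
  intro i
  induction i with
  | zero => exact inv_s0 m n ω hn
  | succ i ih => rw [orb_succ]; exact inv_step m n ω ih

lemma iter_pj (hn : 1 ≤ n) : ∀ j, (step m n ω)^[j] (pj n j) = s0 n := by
  intro j
  induction j with
  | zero => rfl
  | succ j ih =>
    rw [Function.iterate_succ_apply, step_pj m n ω hn]
    exact ih

lemma orb_inj (hn : 1 ≤ n) : ∀ a b : ℕ, orb m n ω a = orb m n ω b → a = b := by
  have peel : ∀ (a k : ℕ), orb m n ω (a + k) = orb m n ω a → orb m n ω k = s0 n := by
    intro a
    induction a with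
    | zero => intro k hk; simpa [orb] using hk
    | succ a ih =>
      intro k hk
      have h1 : orb m n ω (a + k + 1) = orb m n ω (a + 1) := by
        rw [show a + 1 + k = a + k + 1 by omega] at hk
        exact hk
      rw [orb_succ, orb_succ] at h1
      exact ih k (step_inj m n ω (orb_inv m n ω hn _) (orb_inv m n ω hn _) h1)
  have cyc : ∀ k : ℕ, orb m n ω k = s0 n → k = 0 := by
    intro k hk
    by_contra hk0
    -- p_j = orb (k - j) for j ≤ k
    have chain : ∀ j, j ≤ k → pj n j = orb m n ω (k - j) := by
      intro j
      induction j with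
      | zero =>
        intro _
        simp only [Nat.sub_zero, pj]
        rw [hk]
        simp [s0]
      | succ j ih =>
        intro hjk
        have hj : j ≤ k := by omega
        have h1 : step m n ω (pj n (j + 1)) = pj n j := step_pj m n ω hn j
        have h2 : orb m n ω (k - j) = step m n ω (orb m n ω (k - (j+1))) := by
          rw [← orb_succ]
          congr 1
          omega
        rw [ih hj, h2] at h1
        exact step_inj m n ω (inv_pj m n ω hn _) (orb_inv m n ω hn _) h1
    have := chain k (le_refl k)
    simp only [Nat.sub_self] at this
    have h0 : pj n k = s0 n := by rw [this]; rfl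
    have : (-1 - (k : ℤ)) = -1 := by
      have := congrArg (fun z : State => z.1.1) h0
      simpa [pj, s0] using this
    omega
  intro a b hab
  rcases le_total a b with hle | hle
  · obtain ⟨k, rfl⟩ : ∃ k, b = a + k := ⟨b - a, by omega⟩
    have := cyc k (peel a k hab.symm)
    omega
  · obtain ⟨k, rfl⟩ : ∃ k, a = b + k := ⟨a - b, by omega⟩
    have := cyc k (peel b k hab)
    omega

def vacG (k : ℤ × ℤ) : Prop :=
  ¬ Occ m n ω k ∧ 0 ≤ k.1 ∧ k.1 ≤ m ∧ 1 ≤ k.2 ∧ k.2 ≤ n + 1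

def rv (x y : ℤ × ℤ) : Prop := plusAdj x y ∧ vacG m n ω x ∧ vacG m n ω y

def ro (x y : ℤ × ℤ) : Prop := starAdj x y ∧ Occ m n ω x ∧ Occ m n ω y

def VacReach (w : ℤ × ℤ) : Prop := Relation.ReflTransGen (rv m n ω) (0, n + 1) w

def OccReach (q : ℤ × ℤ) : Prop := Relation.ReflTransGen (ro m n ω) (0, n) q

lemma occ_bounds {k : ℤ × ℤ} (hm : 1 ≤ m) (hk : Occ m n ω k) :
    1 ≤ k.2 ∧ k.2 ≤ n ∧ k.1 ≤ m := by
  refine ⟨hk.1.1, hk.1.2, ?_⟩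
  rcases hk.2 with h | h
  · omega
  · exact h.2.1

lemma occ_wall {k : ℤ × ℤ} (h0 : k.1 ≤ 0) (h1 : 1 ≤ k.2) (h2 : k.2 ≤ n) : Occ m n ω k :=
  ⟨⟨h1, h2⟩, Or.inl h0⟩

lemma notOcc_rect {k : ℤ × ℤ} (h : ¬ Occ m n ω k) (h1 : 1 ≤ k.2) (h2 : k.2 ≤ n) : 1 ≤ k.1 := by
  by_contra hcon
  exact h (occ_wall m n ω (by omega) h1 h2)

lemma occ_genuine {k : ℤ × ℤ} (hk : Occ m n ω k) (h1 : 1 ≤ k.1) :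
    inRect m n k ∧ ω k = true := by
  rcases hk.2 with h | h
  · omega
  · exact ⟨⟨h1, h.2.1, hk.1.1, hk.1.2⟩, h.2.2⟩

lemma vac_rect {k : ℤ × ℤ} (h : ¬ Occ m n ω k) (hr : inRect m n k) : ω k = false := by
  rcases Bool.eq_false_or_eq_true (ω k) with hω | hω
  · exact absurd ⟨⟨hr.2.2.1, hr.2.2.2⟩, Or.inr ⟨hr.1, hr.2.1, hω⟩⟩ h
  · exact hω

lemma vacG_start (hm : 1 ≤ m) (hn : 1 ≤ n) : vacG m n ω (0, n + 1) := by
  refine ⟨?_, by simp, by simpa using (by omega : (0:ℤ) ≤ m), by simp; omega, by simp⟩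
  intro hocc
  have := hocc.1
  simp only at this
  omega

lemma occ_extract (hm : 1 ≤ m) (hn : 1 ≤ n)
    (h : ¬ ∃ J : List (ℤ × ℤ), IsLRCrossing starAdj m n J ∧ ∀ k ∈ J, ω k = true)
    (q : ℤ × ℤ) (hq : OccReach m n ω q) (hqm : q.1 = m) : False := by
  obtain ⟨l, hch, hlast⟩ := List.exists_isChain_cons_of_relationReflTransGen hq
  have hocc0 : Occ m n ω (0, n) := ⟨⟨hn, le_refl n⟩, Or.inl (le_refl 0)⟩
  have hall : ∀ k ∈ ((0:ℤ), n) :: l, Occ m n ω k :=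
    chain_all (fun x y hxy => hxy.2.2) _ _ hocc0 hch
  have hch' : (((0:ℤ), n) :: l).Chain' (ro m n ω) := hch
  have hlast' : (((0:ℤ), n) :: l).getLast? = some q := by
    rw [List.getLast?_eq_getLast_of_ne_nil (List.cons_ne_nil _ _), hlast]
  obtain ⟨b, t, hsuf, hbP, htP⟩ :=
    exists_suffix_last (fun k : ℤ × ℤ => k.1 ≤ 0) _
      ⟨((0:ℤ), n), List.mem_cons_self, le_refl 0⟩
  obtain ⟨pre, hpre⟩ := hsuf
  have hchbt : (b :: t).Chain' (ro m n ω) := by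
    rw [← hpre] at hch'
    exact (List.isChain_append.mp hch').2.1
  have hlastbt : (b :: t).getLast? = some q := by
    rw [← hpre] at hlast'
    rwa [List.getLast?_append_of_ne_nil _ (by simp)] at hlast'
  have hallbt : ∀ k ∈ b :: t, Occ m n ω k := fun k hk =>
    hall k (by rw [← hpre]; exact List.mem_append_right _ hk)
  have htne : t ≠ [] := by
    intro h0
    subst h0
    have hqb : b = q := by simpa using hlastbt
    rw [← hqb] at hqm
    omega
  obtain ⟨u, t', rfl⟩ : ∃ u t', t = u :: t' := by
    cases t with
    | nil => exact absurd rfl htne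
    | cons u t' => exact ⟨u, t', rfl⟩
  have hro : ro m n ω b u := (List.isChain_cons_cons.mp hchbt).1
  have hu1 : u.1 = 1 := by
    have hstar := hro.1
    rw [starAdj_coords] at hstar
    have hu_ge : ¬ u.1 ≤ 0 := htP u (List.mem_cons_self)
    omega
  have hpredT : ∀ k ∈ u :: t', inRect m n k ∧ ω k = true := by
    intro k hk
    have hocc := hallbt k (List.mem_cons_of_mem _ hk)
    have h1 : 1 ≤ k.1 := by
      have := htP k hk
      omega
    exact occ_genuine m n ω hocc h1
  have hchT : (u :: t').Chain' (fun x y => x = y ∨ starAdj x y) :=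
    ((List.isChain_cons_cons.mp hchbt).2).imp (fun _ _ hxy => Or.inr hxy.1)
  have hlastT : (u :: t').getLast? = some q := by
    rw [List.getLast?_cons_cons] at hlastbt
    exact hlastbt
  obtain ⟨J, hJ1, hJ2, hJ3, hJ4, hJ5, hJ6⟩ :=
    assemble starAdj (fun _ _ hxy => starAdj_symm hxy)
      (fun k => inRect m n k ∧ ω k = true) (fun k => k.1) 1 m
      (u :: t') u q hchT hpredT rfl hlastT hu1 hqm
  exact h ⟨J, ⟨hJ1, hJ2, hJ3, fun k hk => (hJ4 k hk).1, hJ5, hJ6⟩, fun k hk => (hJ4 k hk).2⟩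

lemma vac_extract (hm : 1 ≤ m) (hn : 1 ≤ n) (w : ℤ × ℤ)
    (hV : VacReach m n ω w) (hw : w.2 = 1) :
    ∃ J : List (ℤ × ℤ), IsTDCrossing plusAdj m n J ∧ ∀ k ∈ J, ω k = false := by
  obtain ⟨l, hch, hlast⟩ := List.exists_isChain_cons_of_relationReflTransGen hV
  have hall : ∀ k ∈ ((0:ℤ), n + 1) :: l, vacG m n ω k :=
    chain_all (fun x y hxy => hxy.2.2) _ _ (vacG_start m n ω hm hn) hch
  have hch' : (((0:ℤ), n + 1) :: l).Chain' (rv m n ω) := hch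
  have hlast' : (((0:ℤ), n + 1) :: l).getLast? = some w := by
    rw [List.getLast?_eq_getLast_of_ne_nil (List.cons_ne_nil _ _), hlast]
  obtain ⟨b, t, hsuf, hbP, htP⟩ :=
    exists_suffix_last (fun k : ℤ × ℤ => k.2 = n + 1) _
      ⟨((0:ℤ), n + 1), List.mem_cons_self, rfl⟩
  obtain ⟨pre, hpre⟩ := hsuf
  have hchbt : (b :: t).Chain' (rv m n ω) := by
    rw [← hpre] at hch'
    exact (List.isChain_append.mp hch').2.1
  have hlastbt : (b :: t).getLast? = some w := by
    rw [← hpre] at hlast'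
    rwa [List.getLast?_append_of_ne_nil _ (by simp)] at hlast'
  have hallbt : ∀ k ∈ b :: t, vacG m n ω k := fun k hk =>
    hall k (by rw [← hpre]; exact List.mem_append_right _ hk)
  have htne : t ≠ [] := by
    intro h0
    subst h0
    have hqb : b = w := by simpa using hlastbt
    rw [hqb, hw] at hbP
    omega
  obtain ⟨u, t', rfl⟩ : ∃ u t', t = u :: t' := by
    cases t with
    | nil => exact absurd rfl htne
    | cons u t' => exact ⟨u, t', rfl⟩
  have hrv : rv m n ω b u := (List.isChain_cons_cons.mp hchbt).1
  have hu2 : u.2 = n := by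
    have hplus := hrv.1
    rw [plusAdj_coords] at hplus
    have hune : ¬ u.2 = n + 1 := htP u (List.mem_cons_self)
    have hb2 : b.2 = n + 1 := hbP
    have hvg := hrv.2.2
    have := hvg.2.2.2.2
    omega
  have hpredT : ∀ k ∈ u :: t', inRect m n k ∧ ω k = false := by
    intro k hk
    have hvg := hallbt k (List.mem_cons_of_mem _ hk)
    have hne : ¬ k.2 = n + 1 := htP k hk
    have h2n : k.2 ≤ n := by
      have := hvg.2.2.2.2
      omega
    have h1 : 1 ≤ k.1 := notOcc_rect m n ω hvg.1 hvg.2.2.2.1 h2n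
    have hrect : inRect m n k := ⟨h1, hvg.2.2.1, hvg.2.2.2.1, h2n⟩
    exact ⟨hrect, vac_rect m n ω hvg.1 hrect⟩
  have hchT : (u :: t').Chain' (fun x y => x = y ∨ plusAdj x y) :=
    ((List.isChain_cons_cons.mp hchbt).2).imp (fun _ _ hxy => Or.inr hxy.1)
  have hlastT : (u :: t').getLast? = some w := by
    rw [List.getLast?_cons_cons] at hlastbt
    exact hlastbt
  obtain ⟨J, hJ1, hJ2, hJ3, hJ4, hJ5, hJ6⟩ :=
    assemble plusAdj (fun _ _ hxy => plusAdj_symm hxy)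
      (fun k => inRect m n k ∧ ω k = false) (fun k => k.2) n 1
      (u :: t') u w hchT hpredT rfl hlastT hu2 hw
  exact ⟨J, ⟨hJ1, hJ2, hJ3, fun k hk => (hJ4 k hk).1, hJ5, hJ6⟩, fun k hk => (hJ4 k hk).2⟩

lemma master_step (hm : 1 ≤ m) (hn : 1 ≤ n)
    (h : ¬ ∃ J : List (ℤ × ℤ), IsLRCrossing starAdj m n J ∧ ∀ k ∈ J, ω k = true)
    (s : State) (hInv : Inv m n ω s) (hvac : vacG m n ω (flankL s.1 s.2))
    (hV : VacReach m n ω (flankL s.1 s.2)) (hO : OccReach m n ω (flankR s.1 s.2)) :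
    (∃ J : List (ℤ × ℤ), IsTDCrossing plusAdj m n J ∧ ∀ k ∈ J, ω k = false) ∨
    (Inv m n ω (step m n ω s) ∧
     vacG m n ω (flankL (step m n ω s).1 (step m n ω s).2) ∧
     VacReach m n ω (flankL (step m n ω s).1 (step m n ω s).2) ∧
     OccReach m n ω (flankR (step m n ω s).1 (step m n ω s).2)) := by
  obtain ⟨c, d⟩ := s
  have hvecd := vec_cases d
  have hfl : flankL (c + vec d) d = flankL c d + vec d := flankL_shift c d
  have hfr : flankR (c + vec d) d = flankR c d + vec d := flankR_shift c d
  have hflr : flankL (c + vec d) d = flankR (c + vec d) d + vec (rotL d) := flankL_eq_flankR _ d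
  have hpr : flankL c d = flankR c d + vec (rotL d) := flankL_eq_flankR c d
  have hrotv : vec (rotL d) = (-(vec d).2, (vec d).1) := vec_rotL d
  have hrocc : Occ m n ω (flankR c d) := hInv.1
  have hrb := occ_bounds m n ω hm hrocc
  have hpocc : ¬ Occ m n ω (flankL c d) := hvac.1
  have hp0 : 0 ≤ (flankL c d).1 := hvac.2.1
  have hpm : (flankL c d).1 ≤ m := hvac.2.2.1
  have hp1 : 1 ≤ (flankL c d).2 := hvac.2.2.2.1
  have hpn : (flankL c d).2 ≤ n + 1 := hvac.2.2.2.2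
  have hfl1 : (flankL (c + vec d) d).1 = (flankL c d).1 + (vec d).1 := by
    rw [hfl, Prod.fst_add]
  have hfl2 : (flankL (c + vec d) d).2 = (flankL c d).2 + (vec d).2 := by
    rw [hfl, Prod.snd_add]
  have hfr1 : (flankR (c + vec d) d).1 = (flankR c d).1 + (vec d).1 := by
    rw [hfr, Prod.fst_add]
  have hfr2 : (flankR (c + vec d) d).2 = (flankR c d).2 + (vec d).2 := by
    rw [hfr, Prod.snd_add]
  have hp1c : (flankL c d).1 = (flankR c d).1 + -(vec d).2 := by
    rw [hpr, hrotv, Prod.fst_add]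
  have hp2c : (flankL c d).2 = (flankR c d).2 + (vec d).1 := by
    rw [hpr, hrotv, Prod.snd_add]
  have hflr1 : (flankL (c + vec d) d).1 = (flankR (c + vec d) d).1 + -(vec d).2 := by
    rw [hflr, hrotv, Prod.fst_add]
  have hflr2 : (flankL (c + vec d) d).2 = (flankR (c + vec d) d).2 + (vec d).1 := by
    rw [hflr, hrotv, Prod.snd_add]
  by_cases hL : Occ m n ω (flankL (c + vec d) d)
  · -- left turn
    right
    rw [step_eq_L m n ω hL]
    refine ⟨⟨?_, ?_⟩, ?_, ?_, ?_⟩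
    · show Occ m n ω (flankR (c + vec d) (rotL d))
      rw [flankR_rotL]; exact hL
    · show ¬ Occ m n ω (flankL (c + vec d) (rotL d))
      rw [flankL_rotL]; exact hpocc
    · show vacG m n ω (flankL (c + vec d) (rotL d))
      rw [flankL_rotL]; exact hvac
    · show VacReach m n ω (flankL (c + vec d) (rotL d))
      rw [flankL_rotL]; exact hV
    · show OccReach m n ω (flankR (c + vec d) (rotL d))
      rw [flankR_rotL]
      refine hO.tail ⟨?_, hrocc, hL⟩
      rw [hfl, hpr]
      exact starAdj_diag _ d
  · by_cases hR : Occ m n ω (flankR (c + vec d) d)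
    · -- straight
      right
      rw [step_eq_S m n ω hL hR]
      have hfrb := occ_bounds m n ω hm hR
      have hq0 : 0 ≤ (flankL (c + vec d) d).1 := by
        by_contra hcon
        push_neg at hcon
        have ha : (vec d).1 = -1 ∧ (flankL c d).1 = 0 := by omega
        rcases (by omega : (flankL c d).2 ≤ n ∨ (flankL c d).2 = n + 1) with hc1 | hc1
        · have := notOcc_rect m n ω hpocc hp1 hc1
          omega
        · omega
      have hq1 : 1 ≤ (flankL (c + vec d) d).2 := by omega
      have hqn : (flankL (c + vec d) d).2 ≤ n + 1 := by omega
      have hqm : (flankL (c + vec d) d).1 ≤ m := by omega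
      have hvgq : vacG m n ω (flankL (c + vec d) d) := ⟨hL, hq0, hqm, hq1, hqn⟩
      refine ⟨⟨hR, hL⟩, hvgq, ?_, ?_⟩
      · show VacReach m n ω (flankL (c + vec d) d)
        refine hV.tail ⟨?_, hvac, hvgq⟩
        rw [hfl]; exact plusAdj_add_vec _ d
      · show OccReach m n ω (flankR (c + vec d) d)
        refine hO.tail ⟨?_, hrocc, hR⟩
        rw [hfr]; exact starAdj_add_vec _ d
    · -- right turn
      by_cases hT1 : (flankL (c + vec d) d).2 ≤ 0
      · left
        have hp2 : (flankL c d).2 = 1 := by omega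
        exact vac_extract m n ω hm hn _ hV hp2
      · by_cases hT2 : m + 1 ≤ (flankL (c + vec d) d).1
        · exact ((occ_extract m n ω hm hn h (flankR c d) hO (by omega)).elim)
        · have hfl0 : 0 ≤ (flankL (c + vec d) d).1 := by
            by_contra hcon
            push_neg at hcon
            have ha : (vec d).1 = -1 ∧ (flankL c d).1 = 0 := by omega
            rcases (by omega : (flankL c d).2 ≤ n ∨ (flankL c d).2 = n + 1) with hc1 | hc1
            · have := notOcc_rect m n ω hpocc hp1 hc1
              omega
            · omega
          have hfl2n : (flankL (c + vec d) d).2 ≤ n + 1 := by omega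
          have hfl1' : 1 ≤ (flankL (c + vec d) d).2 := by omega
          have hvgfl : vacG m n ω (flankL (c + vec d) d) :=
            ⟨hL, hfl0, by omega, hfl1', hfl2n⟩
          by_cases hU2 : m + 1 ≤ (flankR (c + vec d) d).1
          · exact ((occ_extract m n ω hm hn h (flankR c d) hO (by omega)).elim)
          · have hfr_y1 : 1 ≤ (flankR (c + vec d) d).2 := by omega
            have hfr_x0 : 0 ≤ (flankR (c + vec d) d).1 := by
              by_contra hcon
              push_neg at hcon
              rcases (by omega :
                  (flankR (c + vec d) d).2 ≤ n ∨ (flankR (c + vec d) d).2 = n + 1) with hc1 | hc1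
              · have := notOcc_rect m n ω hR hfr_y1 hc1
                omega
              · omega
            have hfr_yn : (flankR (c + vec d) d).2 ≤ n + 1 := by omega
            have hvgfr : vacG m n ω (flankR (c + vec d) d) :=
              ⟨hR, hfr_x0, by omega, hfr_y1, hfr_yn⟩
            right
            rw [step_eq_R m n ω hL hR]
            refine ⟨⟨?_, ?_⟩, ?_, ?_, ?_⟩
            · show Occ m n ω (flankR (c + vec d) (rotR d))
              rw [flankR_rotR]; exact hrocc
            · show ¬ Occ m n ω (flankL (c + vec d) (rotR d))
              rw [flankL_rotR]; exact hR
            · show vacG m n ω (flankL (c + vec d) (rotR d))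
              rw [flankL_rotR]; exact hvgfr
            · show VacReach m n ω (flankL (c + vec d) (rotR d))
              rw [flankL_rotR]
              refine (hV.tail ⟨?_, hvac, hvgfl⟩).tail ⟨?_, hvgfl, hvgfr⟩
              · rw [hfl]; exact plusAdj_add_vec _ d
              · rw [hflr]; exact plusAdj_symm (plusAdj_add_vec _ (rotL d))
            · show OccReach m n ω (flankR (c + vec d) (rotR d))
              rw [flankR_rotR]; exact hO

lemma master (hm : 1 ≤ m) (hn : 1 ≤ n)
    (h : ¬ ∃ J : List (ℤ × ℤ), IsLRCrossing starAdj m n J ∧ ∀ k ∈ J, ω k = true) :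
    ∀ i : ℕ, (∃ J : List (ℤ × ℤ), IsTDCrossing plusAdj m n J ∧ ∀ k ∈ J, ω k = false) ∨
      (Inv m n ω (orb m n ω i) ∧
       vacG m n ω (flankL (orb m n ω i).1 (orb m n ω i).2) ∧
       VacReach m n ω (flankL (orb m n ω i).1 (orb m n ω i).2) ∧
       OccReach m n ω (flankR (orb m n ω i).1 (orb m n ω i).2)) := by
  intro i
  induction i with
  | zero =>
    right
    refine ⟨inv_s0 m n ω hn, ?_, ?_, ?_⟩
    · show vacG m n ω (flankL (-1, n) Dir.E)
      have : flankL ((-1 : ℤ), n) Dir.E = (0, n + 1) := by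
        simp [flankL]
      rw [this]
      exact vacG_start m n ω hm hn
    · show VacReach m n ω (flankL (-1, n) Dir.E)
      have : flankL ((-1 : ℤ), n) Dir.E = (0, n + 1) := by
        simp [flankL]
      rw [this]
      exact Relation.ReflTransGen.refl
    · show OccReach m n ω (flankR (-1, n) Dir.E)
      have : flankR ((-1 : ℤ), n) Dir.E = (0, n) := by
        simp [flankR]
      rw [this]
      exact Relation.ReflTransGen.refl
  | succ i ih =>
    rcases ih with hGoal | ⟨h1, h2, h3, h4⟩
    · exact Or.inl hGoal
    · rw [orb_succ]
      exact master_step m n ω hm hn h (orb m n ω i) h1 h2 h3 h4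

lemma corner_mem {c : ℤ × ℤ} {d : Dir} (hvg : vacG m n ω (flankL c d)) :
    -1 ≤ c.1 ∧ c.1 ≤ m ∧ 0 ≤ c.2 ∧ c.2 ≤ n + 1 := by
  have h1 := hvg.2.1
  have h2 := hvg.2.2.1
  have h3 := hvg.2.2.2.1
  have h4 := hvg.2.2.2.2
  cases d <;> simp only [flankL] at h1 h2 h3 h4 <;> omega

end Walk


end VPTD

/-- If `Λ` contains no occupied star connected left-right crossing, then it contains
a vacant plus connected top-down crossing. -/
theorem vacant_plus_TD_of_no_occupied_star_LR
    (m n : ℤ) (hm : 1 ≤ m) (hn : 1 ≤ n) (ω : ℤ × ℤ → Bool)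
    (h : ¬ ∃ J : List (ℤ × ℤ), IsLRCrossing starAdj m n J ∧ ∀ k ∈ J, ω k = true) :
    ∃ J : List (ℤ × ℤ), IsTDCrossing plusAdj m n J ∧ ∀ k ∈ J, ω k = false := by
  classical
  by_contra hg
  have hINV : ∀ i : ℕ,
      VPTD.vacG m n ω (VPTD.flankL (VPTD.orb m n ω i).1 (VPTD.orb m n ω i).2) := by
    intro i
    rcases VPTD.master m n ω hm hn h i with hGoal | hi
    · exact absurd hGoal hg
    · exact hi.2.1
  set boxF : Finset ((ℤ × ℤ) × VPTD.Dir) :=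
    (Finset.Icc (-1 : ℤ) m ×ˢ Finset.Icc (0 : ℤ) (n + 1)) ×ˢ
      (Finset.univ : Finset VPTD.Dir) with hbox
  have hmem : ∀ i : ℕ, VPTD.orb m n ω i ∈ boxF := by
    intro i
    have hcm := VPTD.corner_mem m n ω (hINV i)
    rw [hbox]
    refine Finset.mem_product.mpr ⟨Finset.mem_product.mpr ⟨?_, ?_⟩, Finset.mem_univ _⟩
    · exact Finset.mem_Icc.mpr ⟨hcm.1, hcm.2.1⟩
    · exact Finset.mem_Icc.mpr ⟨hcm.2.2.1, hcm.2.2.2⟩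
  have hcard := Finset.card_le_card_of_injOn (s := Finset.range (boxF.card + 1)) (t := boxF)
      (fun i => VPTD.orb m n ω i) (fun i _ => hmem i)
      (fun a _ b _ hab => VPTD.orb_inj m n ω hn a b hab)
  rw [Finset.card_range] at hcard
  omega
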